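/- Let A be a (not necessarily unital) associative algebra, n ≥ 2, satisfying the identity a_1 a_2 ⋯ a_{n−1} a_n = a_n a_2 ⋯ a_{n−1} a_1 (swap of first and last factors). Then A is eventually commutative of degree n+1: for all τ ∈ S_{n+1} and all a_1,...,a_{n+1} ∈ A, a_1⋯a_{n+1} = a_{τ(1)}⋯a_{τ(n+1)}. -/

import Mathlib

set_option maxHeartbeats 1000000

/-- Product of a nonempty list in a (non-unital) multiplicative structure;
junk value `0` for the empty list. -/
def listMul {A : Type*} [Mul A] [Zero A] : List A → A
  | [] => 0
  | [x] => x
  | x :: y :: l => x * listMul (y :: l)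

/-- The product `a 0 * a 1 * ⋯ * a (k-1)`. -/
def finProd {A : Type*} [Mul A] [Zero A] {k : ℕ} (a : Fin k → A) : A :=
  listMul (List.ofFn a)

lemma listMul_cons {A : Type*} [Mul A] [Zero A] (x : A) {l : List A} (h : l ≠ []) :
    listMul (x :: l) = x * listMul l := by
  cases l with
  | nil => exact absurd rfl h
  | cons y t => rfl

lemma listMul_append {A : Type*} [Semigroup A] [Zero A] {l₁ l₂ : List A}
    (h₁ : l₁ ≠ []) (h₂ : l₂ ≠ []) :
    listMul (l₁ ++ l₂) = listMul l₁ * listMul l₂ := by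
  induction l₁ with
  | nil => exact absurd rfl h₁
  | cons x t ih =>
    cases t with
    | nil => simpa [listMul] using listMul_cons x h₂
    | cons y s =>
      show listMul (x :: ((y :: s) ++ l₂)) = listMul (x :: y :: s) * listMul l₂
      rw [listMul_cons x (by simp), ih (by simp), listMul_cons x (by simp), mul_assoc]

lemma listMul_pair {A : Type*} [Mul A] [Zero A] (p q : A) : listMul [p, q] = p * q := rfl

lemma listMul_append_pair {A : Type*} [Semigroup A] [Zero A] (u : List A) (p q : A) :
    listMul (u ++ [p, q]) = listMul (u ++ [p * q]) := by
  cases u with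
  | nil => simp [listMul]
  | cons c t =>
    rw [listMul_append (l₁ := c :: t) (l₂ := [p, q]) (by simp) (by simp),
      listMul_append (l₁ := c :: t) (l₂ := [p * q]) (by simp) (by simp)]
    congr 1

lemma swapval' {k : ℕ} (p q y : Fin k) :
    (Equiv.swap p q) y = ⟨if (y:ℕ) = (p:ℕ) then (q:ℕ) else if (y:ℕ) = (q:ℕ) then (p:ℕ) else (y:ℕ),
      by split_ifs <;> omega⟩ := by
  rw [Equiv.swap_apply_def]
  split_ifs <;> simp_all [Fin.ext_iff]

lemma rotval' (m : ℕ) (y : Fin (m+3)) :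
    (finRotate (m+3)) y = ⟨if (y:ℕ) = m+2 then 0 else (y:ℕ)+1, by split_ifs <;> omega⟩ := by
  apply Fin.ext
  rw [finRotate_succ_apply (n := m+2), Fin.val_add_one]
  by_cases h : (y:ℕ) = m+2 <;> simp [h, Fin.ext_iff, Fin.last]

/-- The "merge-first-two-then-swap-ends" permutation:
`0 ↦ m+2`, `i ↦ i+1` for `1 ≤ i ≤ m`, `m+1 ↦ 0`, `m+2 ↦ 1`. -/
def muP (m : ℕ) : Equiv.Perm (Fin (m+3)) :=
  Equiv.swap ⟨0, by omega⟩ ⟨m+2, by omega⟩ * Equiv.swap ⟨0, by omega⟩ ⟨1, by omega⟩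
    * finRotate (m+3)

lemma muval (m : ℕ) (y : Fin (m+3)) :
    ((muP m) y : ℕ) = if (y:ℕ) = m+1 then 0 else if (y:ℕ) = m+2 then 1
      else if (y:ℕ) = 0 then m+2 else (y:ℕ)+1 := by
  have hy := y.isLt
  simp only [muP, Equiv.Perm.mul_apply, swapval', rotval', Fin.val_mk]
  split_ifs <;> first | contradiction | omega

section dec
variable {α : Type*}

lemma d1 (m : ℕ) (a : Fin (m+3) → α) :
    List.ofFn a = a ⟨0, by omega⟩ ::
      ((List.ofFn fun j : Fin m => a ⟨(j:ℕ)+1, by omega⟩) ++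
        [a ⟨m+1, by omega⟩, a ⟨m+2, by omega⟩]) := by
  apply List.ext_getElem (by simp)
  intro i hi hi'
  simp only [List.getElem_ofFn, List.getElem_cons, List.getElem_append, List.length_ofFn,
    List.length_cons, List.length_append, List.length_singleton] at hi hi' ⊢
  split_ifs <;> first
    | (congr 1; apply Fin.ext; simp only [List.getElem_ofFn, Fin.val_mk]; omega)
    | omega

lemma d2 (m : ℕ) (a : Fin (m+3) → α) :
    List.ofFn a = a ⟨0, by omega⟩ :: a ⟨1, by omega⟩ ::
      ((List.ofFn fun j : Fin m => a ⟨(j:ℕ)+2, by omega⟩) ++ [a ⟨m+2, by omega⟩]) := by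
  apply List.ext_getElem (by simp)
  intro i hi hi'
  simp only [List.getElem_ofFn, List.getElem_cons, List.getElem_append, List.length_ofFn,
    List.length_cons, List.length_append, List.length_singleton] at hi hi' ⊢
  split_ifs <;> first
    | (congr 1; apply Fin.ext; simp only [List.getElem_ofFn, Fin.val_mk]; omega)
    | omega

lemma dA (m : ℕ) (a : Fin (m+3) → α) :
    List.ofFn (fun i => a (Equiv.swap (⟨0, by omega⟩ : Fin (m+3)) ⟨m+1, by omega⟩ i))
      = a ⟨m+1, by omega⟩ ::
      ((List.ofFn fun j : Fin m => a ⟨(j:ℕ)+1, by omega⟩) ++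
        [a ⟨0, by omega⟩, a ⟨m+2, by omega⟩]) := by
  apply List.ext_getElem (by simp)
  intro i hi hi'
  simp only [List.getElem_ofFn, List.getElem_cons, List.getElem_append, List.length_ofFn,
    List.length_cons, List.length_append, List.length_singleton] at hi hi' ⊢
  split_ifs <;> first
    | (congr 1; apply Fin.ext; simp only [List.getElem_ofFn, swapval', Fin.val_mk];
        split_ifs <;> omega)
    | omega

lemma dB (m : ℕ) (a : Fin (m+3) → α) :
    List.ofFn (fun i => a (Equiv.swap (⟨1, by omega⟩ : Fin (m+3)) ⟨m+2, by omega⟩ i))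
      = a ⟨0, by omega⟩ :: a ⟨m+2, by omega⟩ ::
      ((List.ofFn fun j : Fin m => a ⟨(j:ℕ)+2, by omega⟩) ++ [a ⟨1, by omega⟩]) := by
  apply List.ext_getElem (by simp)
  intro i hi hi'
  simp only [List.getElem_ofFn, List.getElem_cons, List.getElem_append, List.length_ofFn,
    List.length_cons, List.length_append, List.length_singleton] at hi hi' ⊢
  split_ifs <;> first
    | (congr 1; apply Fin.ext; simp only [List.getElem_ofFn, swapval', Fin.val_mk];
        split_ifs <;> omega)
    | omega

lemma dMu (m : ℕ) (a : Fin (m+3) → α) :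
    List.ofFn (fun i => a (muP m i))
      = a ⟨m+2, by omega⟩ ::
      ((List.ofFn fun j : Fin m => a ⟨(j:ℕ)+2, by omega⟩) ++
        [a ⟨0, by omega⟩, a ⟨1, by omega⟩]) := by
  apply List.ext_getElem (by simp)
  intro i hi hi'
  simp only [List.getElem_ofFn, List.getElem_cons, List.getElem_append, List.length_ofFn,
    List.length_cons, List.length_append, List.length_singleton] at hi hi' ⊢
  split_ifs <;> first
    | (congr 1; apply Fin.ext; simp only [List.getElem_ofFn, muval, Fin.val_mk];
        split_ifs <;> omega)
    | omega

end dec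

theorem swap_first_last_eventually_commutative {F A : Type*} [Field F] [NonUnitalRing A] [Module F A]
    [SMulCommClass F A A] [IsScalarTower F A A]
    (n : ℕ) (hn : 2 ≤ n)
    (hid : ∀ a : Fin n → A, finProd a =
      finProd (fun i => a (Equiv.swap (⟨0, by omega⟩ : Fin n) ⟨n - 1, by omega⟩ i))) :
    ∀ τ : Equiv.Perm (Fin (n + 1)), ∀ a : Fin (n + 1) → A,
      finProd a = finProd (fun i => a (τ i)) := by
  obtain ⟨m, rfl⟩ : ∃ m, n = m + 2 := ⟨n - 2, by omega⟩
  -- list form of the identity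
  have hid' : ∀ (x y : A) (mid : List A), mid.length = m →
      listMul (x :: (mid ++ [y])) = listMul (y :: (mid ++ [x])) := by
    intro x y mid hmid
    have h1 : (x :: (mid ++ [y])).length = m + 2 := by simp [hmid]
    have key := hid (fun i => (x :: (mid ++ [y])).get (Fin.cast h1.symm i))
    have e1 : List.ofFn (fun i : Fin (m + 2) => (x :: (mid ++ [y])).get (Fin.cast h1.symm i))
        = x :: (mid ++ [y]) := by
      apply List.ext_getElem (by simp [hmid])
      intro i hi hi'
      simp only [List.getElem_ofFn, List.get_eq_getElem, Fin.coe_cast]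
    have e2 : List.ofFn (fun i : Fin (m + 2) => (x :: (mid ++ [y])).get (Fin.cast h1.symm
          (Equiv.swap (⟨0, by omega⟩ : Fin (m + 2)) ⟨m + 2 - 1, by omega⟩ i)))
        = y :: (mid ++ [x]) := by
      apply List.ext_getElem (by simp [hmid])
      intro i hi hi'
      have hi2 : i < m + 2 := by simp [hmid] at hi'; omega
      simp only [List.getElem_ofFn, List.get_eq_getElem, Equiv.swap_apply_def, Fin.ext_iff,
        Fin.coe_cast]
      split_ifs with c1 c2 <;>
        simp only [List.getElem_cons, List.getElem_append, hmid, List.length_cons,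
          List.length_append, List.length_singleton] at * <;>
        split_ifs <;> first | rfl | omega
    rw [finProd, finProd, e1, e2] at key
    exact key
  -- the three generating identities
  have pA : ∀ a : Fin (m+3) → A, finProd a =
      finProd (fun i => a (Equiv.swap (⟨0, by omega⟩ : Fin (m+3)) ⟨m+1, by omega⟩ i)) := by
    intro a
    rw [finProd, finProd, d1 m a, dA m a]
    have r : ∀ x y : A,
        (x :: ((List.ofFn fun j : Fin m => a ⟨(j:ℕ)+1, by omega⟩) ++ [y, a ⟨m+2, by omega⟩]))
        = (x :: ((List.ofFn fun j : Fin m => a ⟨(j:ℕ)+1, by omega⟩) ++ [y]))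
            ++ [a ⟨m+2, by omega⟩] := by
      intro x y; simp
    rw [r, r,
      listMul_append (l₁ := _ :: _) (l₂ := [a ⟨m+2, by omega⟩]) (by simp) (by simp),
      listMul_append (l₁ := _ :: _) (l₂ := [a ⟨m+2, by omega⟩]) (by simp) (by simp),
      hid' (a ⟨0, by omega⟩) (a ⟨m+1, by omega⟩) _ (by simp)]
  have pB : ∀ a : Fin (m+3) → A, finProd a =
      finProd (fun i => a (Equiv.swap (⟨1, by omega⟩ : Fin (m+3)) ⟨m+2, by omega⟩ i)) := by
    intro a
    rw [finProd, finProd, d2 m a, dB m a,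
      listMul_cons (a ⟨0, by omega⟩)
        (l := a ⟨1, by omega⟩ :: ((List.ofFn fun j : Fin m => a ⟨(j:ℕ)+2, by omega⟩)
          ++ [a ⟨m+2, by omega⟩])) (by simp),
      listMul_cons (a ⟨0, by omega⟩)
        (l := a ⟨m+2, by omega⟩ :: ((List.ofFn fun j : Fin m => a ⟨(j:ℕ)+2, by omega⟩)
          ++ [a ⟨1, by omega⟩])) (by simp),
      hid' (a ⟨1, by omega⟩) (a ⟨m+2, by omega⟩) _ (by simp)]
  have pMu : ∀ a : Fin (m+3) → A, finProd a = finProd (fun i => a (muP m i)) := by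
    intro a
    rw [finProd, finProd, d2 m a, dMu m a]
    have l1 : listMul (a ⟨0, by omega⟩ :: a ⟨1, by omega⟩ ::
          ((List.ofFn fun j : Fin m => a ⟨(j:ℕ)+2, by omega⟩) ++ [a ⟨m+2, by omega⟩]))
        = listMul ((a ⟨0, by omega⟩ * a ⟨1, by omega⟩) ::
          ((List.ofFn fun j : Fin m => a ⟨(j:ℕ)+2, by omega⟩) ++ [a ⟨m+2, by omega⟩])) := by
      rw [listMul_cons _ (by simp), listMul_cons _ (by simp), listMul_cons _ (by simp),
        mul_assoc]
    have l2 : listMul (a ⟨m+2, by omega⟩ ::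
          ((List.ofFn fun j : Fin m => a ⟨(j:ℕ)+2, by omega⟩) ++
            [a ⟨0, by omega⟩ * a ⟨1, by omega⟩]))
        = listMul (a ⟨m+2, by omega⟩ ::
          ((List.ofFn fun j : Fin m => a ⟨(j:ℕ)+2, by omega⟩) ++
            [a ⟨0, by omega⟩, a ⟨1, by omega⟩])) := by
      rw [listMul_cons _ (by simp), listMul_cons _ (by simp),
        listMul_append_pair]
    rw [l1, hid' _ _ _ (by simp), l2]
  -- the subgroup of good permutations
  let H : Subgroup (Equiv.Perm (Fin (m+3))) :=
    { carrier := {τ | ∀ a : Fin (m+3) → A, finProd a = finProd (fun i => a (τ i))}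
      one_mem' := fun _ => rfl
      mul_mem' := by
        intro σ τ hσ hτ a
        exact (hσ a).trans (hτ fun i => a (σ i))
      inv_mem' := by
        intro σ hσ a
        have h := hσ (fun i => a (σ⁻¹ i))
        simp only [Equiv.Perm.inv_def, Equiv.symm_apply_apply] at h
        exact h.symm }
  have hAH : Equiv.swap (⟨0, by omega⟩ : Fin (m+3)) ⟨m+1, by omega⟩ ∈ H := pA
  have hBH : Equiv.swap (⟨1, by omega⟩ : Fin (m+3)) ⟨m+2, by omega⟩ ∈ H := pB
  have hMuH : muP m ∈ H := pMu
  have htH : Equiv.swap (⟨0, by omega⟩ : Fin (m+3)) ⟨m+2, by omega⟩ ∈ H := by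
    have h1 : muP m ⟨0, by omega⟩ = ⟨m+2, by omega⟩ := by
      apply Fin.ext; simp only [muval, Fin.val_mk]; split_ifs <;> first | contradiction | omega
    have h2 : muP m ⟨m+1, by omega⟩ = ⟨0, by omega⟩ := by
      apply Fin.ext; simp only [muval, Fin.val_mk]; split_ifs <;> first | contradiction | omega
    have hc := Equiv.swap_apply_apply (muP m) ⟨0, by omega⟩ ⟨m+1, by omega⟩
    rw [h1, h2] at hc
    rw [Equiv.swap_comm, hc]
    exact H.mul_mem (H.mul_mem hMuH hAH) (H.inv_mem hMuH)
  have hrotH : finRotate (m+3) ∈ H := by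
    have hEq : finRotate (m+3) = muP m * Equiv.swap (⟨0, by omega⟩ : Fin (m+3)) ⟨m+1, by omega⟩
        * Equiv.swap (⟨0, by omega⟩ : Fin (m+3)) ⟨m+2, by omega⟩ := by
      apply Equiv.ext; intro x; apply Fin.ext
      have hx := x.isLt
      simp only [Equiv.Perm.mul_apply, muval, swapval', rotval', Fin.val_mk]
      split_ifs <;> first | contradiction | omega
    rw [hEq]
    exact H.mul_mem (H.mul_mem hMuH hAH) htH
  have hrot0 : (finRotate (m+3)) (⟨0, by omega⟩ : Fin (m+3)) = ⟨1, by omega⟩ := by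
    apply Fin.ext; rw [rotval']; simp only [Fin.val_mk]; split_ifs <;> first | contradiction | omega
  have hrotN : (finRotate (m+3)) (⟨m+2, by omega⟩ : Fin (m+3)) = ⟨0, by omega⟩ := by
    apply Fin.ext; rw [rotval']; simp only [Fin.val_mk]; split_ifs <;> first | contradiction | omega
  have h01H : Equiv.swap (⟨0, by omega⟩ : Fin (m+3)) ⟨1, by omega⟩ ∈ H := by
    have hc := Equiv.swap_apply_apply (finRotate (m+3)) ⟨0, by omega⟩ ⟨m+2, by omega⟩
    rw [hrot0, hrotN] at hc
    rw [Equiv.swap_comm, hc]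
    exact H.mul_mem (H.mul_mem hrotH htH) (H.inv_mem hrotH)
  have hcl := Equiv.Perm.closure_cycle_adjacent_swap (σ := finRotate (m+3))
    (isCycle_finRotate (n := m+1)) (support_finRotate (n := m+1)) ⟨0, by omega⟩
  intro τ a
  have hτ : τ ∈ H := by
    have hmem : τ ∈ Subgroup.closure ({finRotate (m+3),
        Equiv.swap (⟨0, by omega⟩ : Fin (m+3)) (finRotate (m+3) ⟨0, by omega⟩)} :
          Set (Equiv.Perm (Fin (m+3)))) := by
      rw [hcl]; exact Subgroup.mem_top τ
    refine (Subgroup.closure_le H).mpr ?_ hmem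
    intro g hg
    simp only [Set.mem_insert_iff, Set.mem_singleton_iff] at hg
    rcases hg with rfl | rfl
    · exact hrotH
    · rw [hrot0]; exact h01H
  exact hτ a
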